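/- Let n ≥ 2 and v ∈ ℝⁿ. The Lorentz orbit of v contains a vector of minimal standard Euclidean norm — i.e., there exists Λ₀ ∈ O(1,n−1) such that ‖Λ₀v‖ ≤ ‖Λv‖ (standard Euclidean norm) for all Λ ∈ O(1,n−1) — if and only if v = 0 or vᵀηv ≠ 0, i.e., if and only if v is not a nonzero null vector. -/

import Mathlib

open Matrix

noncomputable section

/-- The Minkowski metric `η = diag(-1, 1, …, 1)` on `ℝⁿ`. -/
def eta (n : ℕ) : Matrix (Fin n) (Fin n) ℝ :=
  Matrix.diagonal fun i => if i.val = 0 then (-1 : ℝ) else 1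

/-- The Lorentz group `O(1,n-1)`: matrices with `Λᵀ η Λ = η`. -/
def IsLorentz {n : ℕ} (Λ : Matrix (Fin n) (Fin n) ℝ) : Prop :=
  Λᵀ * eta n * Λ = eta n

/-- The standard Euclidean norm of a vector of `ℝⁿ`. -/
def euclNorm {n : ℕ} (v : Fin n → ℝ) : ℝ :=
  Real.sqrt (v ⬝ᵥ v)

namespace AlignAux

variable {n : ℕ}

/-- Minkowski bilinear form. -/
def B (x y : Fin n → ℝ) : ℝ := x ⬝ᵥ (eta n).mulVec y

lemma eta_transpose : (eta n)ᵀ = eta n := Matrix.diagonal_transpose _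

lemma eta_mul_eta : eta n * eta n = 1 := by
  rw [eta, Matrix.diagonal_mul_diagonal]
  ext i j
  by_cases h : i = j
  · simp [Matrix.diagonal, Matrix.one_apply, h]; split <;> norm_num
  · simp [Matrix.diagonal, Matrix.one_apply, h]

lemma etaDot (x y : Fin n → ℝ) : (eta n).mulVec x ⬝ᵥ y = B x y := by
  rw [B, Matrix.dotProduct_mulVec, ← Matrix.mulVec_transpose, eta_transpose,
    dotProduct_comm]

lemma B_symm (x y : Fin n → ℝ) : B x y = B y x := by
  rw [← etaDot, B, dotProduct_comm]

lemma mulVec_vecMulVec (u w x : Fin n → ℝ) :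
    (Matrix.vecMulVec u w).mulVec x = (w ⬝ᵥ x) • u := by
  ext i
  simp only [Matrix.vecMulVec, Matrix.of_apply, Matrix.mulVec, dotProduct,
    Pi.smul_apply, smul_eq_mul, Finset.sum_mul]
  exact Finset.sum_congr rfl fun k _ => by ring

lemma mul_vecMulVec (M : Matrix (Fin n) (Fin n) ℝ) (u w : Fin n → ℝ) :
    M * Matrix.vecMulVec u w = Matrix.vecMulVec (M.mulVec u) w := by
  ext i j
  simp only [Matrix.vecMulVec, Matrix.of_apply, Matrix.mul_apply, Matrix.mulVec,
    dotProduct, Finset.sum_mul]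
  exact Finset.sum_congr rfl fun k _ => by ring

lemma vecMulVec_mul (M : Matrix (Fin n) (Fin n) ℝ) (u w : Fin n → ℝ) :
    Matrix.vecMulVec u w * M = Matrix.vecMulVec u (Mᵀ.mulVec w) := by
  ext i j
  simp only [Matrix.vecMulVec, Matrix.of_apply, Matrix.mul_apply, Matrix.mulVec,
    dotProduct, Matrix.transpose_apply, Finset.mul_sum]
  exact Finset.sum_congr rfl fun k _ => by ring

lemma vecMulVec_mul_vecMulVec (a b c d : Fin n → ℝ) :
    Matrix.vecMulVec a b * Matrix.vecMulVec c d = (b ⬝ᵥ c) • Matrix.vecMulVec a d := by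
  ext i j
  simp only [Matrix.vecMulVec, Matrix.of_apply, Matrix.mul_apply, Matrix.smul_apply,
    smul_eq_mul, dotProduct, Finset.sum_mul]
  exact Finset.sum_congr rfl fun k _ => by ring

lemma vecMulVec_transpose (u w : Fin n → ℝ) :
    (Matrix.vecMulVec u w)ᵀ = Matrix.vecMulVec w u := by
  ext i j; simp [Matrix.vecMulVec, mul_comm]

/-- Minkowski reflection in `u`. -/
def refl (u : Fin n → ℝ) : Matrix (Fin n) (Fin n) ℝ :=
  1 - (2 / B u u) • Matrix.vecMulVec u ((eta n).mulVec u)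

lemma refl_mulVec (u x : Fin n → ℝ) :
    (refl u).mulVec x = x - (2 / B u u * B u x) • u := by
  rw [refl, Matrix.sub_mulVec, Matrix.one_mulVec, Matrix.smul_mulVec, mulVec_vecMulVec,
    etaDot, smul_smul]

lemma refl_isLorentz {u : Fin n → ℝ} (hu : B u u ≠ 0) : IsLorentz (refl u) := by
  set e := (eta n).mulVec u with he
  set c := B u u with hc
  set c' := 2 / c with hc'
  have hT : (refl u)ᵀ = 1 - c' • Matrix.vecMulVec e u := by
    rw [refl, Matrix.transpose_sub, Matrix.transpose_one, Matrix.transpose_smul,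
      vecMulVec_transpose]
  have h1 : eta n * Matrix.vecMulVec u e = Matrix.vecMulVec e e := by
    rw [mul_vecMulVec]
  have h2 : Matrix.vecMulVec e u * eta n = Matrix.vecMulVec e e := by
    rw [vecMulVec_mul, eta_transpose]
  have h3 : Matrix.vecMulVec e u * Matrix.vecMulVec e e
      = c • Matrix.vecMulVec e e := by
    rw [vecMulVec_mul_vecMulVec]; rfl
  have h4 : eta n * refl u = eta n - c' • Matrix.vecMulVec e e := by
    rw [refl, ← hc, ← hc', ← he, Matrix.mul_sub, Matrix.mul_one, Matrix.mul_smul, h1]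
  unfold IsLorentz
  rw [Matrix.mul_assoc, h4, hT]
  rw [Matrix.sub_mul, Matrix.one_mul, Matrix.smul_mul, Matrix.mul_sub, Matrix.mul_smul, h3,
    smul_smul, h2, smul_sub, smul_smul]
  have hcc : c' * (c' * c) = c' + c' := by
    rw [hc']; field_simp; ring
  rw [hcc, add_smul]
  abel

lemma B_sub_left (x y z : Fin n → ℝ) : B (x - y) z = B x z - B y z := by
  simp [B, sub_dotProduct]

lemma B_sub_right (x y z : Fin n → ℝ) : B x (y - z) = B x y - B x z := by
  simp [B, Matrix.mulVec_sub, dotProduct_sub]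

lemma B_add_left (x y z : Fin n → ℝ) : B (x + y) z = B x z + B y z := by
  simp [B, add_dotProduct]

lemma B_add_right (x y z : Fin n → ℝ) : B x (y + z) = B x y + B x z := by
  simp [B, Matrix.mulVec_add, dotProduct_add]

lemma B_smul_left (t : ℝ) (x y : Fin n → ℝ) : B (t • x) y = t * B x y := by
  simp [B, smul_dotProduct]

lemma B_smul_right (t : ℝ) (x y : Fin n → ℝ) : B x (t • y) = t * B x y := by
  simp [B, Matrix.mulVec_smul, dotProduct_smul]

lemma isLorentz_one : IsLorentz (1 : Matrix (Fin n) (Fin n) ℝ) := by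
  simp [IsLorentz]

lemma isLorentz_mul {A C : Matrix (Fin n) (Fin n) ℝ} (hA : IsLorentz A) (hC : IsLorentz C) :
    IsLorentz (A * C) := by
  unfold IsLorentz at *
  rw [Matrix.transpose_mul]
  calc Cᵀ * Aᵀ * eta n * (A * C) = Cᵀ * (Aᵀ * eta n * A) * C := by
        noncomm_ring
    _ = eta n := by rw [hA, hC]

lemma B_lorentz {Λ : Matrix (Fin n) (Fin n) ℝ} (hΛ : IsLorentz Λ) (x y : Fin n → ℝ) :
    B (Λ.mulVec x) (Λ.mulVec y) = B x y := by
  rw [B, Matrix.mulVec_mulVec, Matrix.dotProduct_mulVec, ← Matrix.mulVec_transpose,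
    Matrix.transpose_mul, eta_transpose, Matrix.mulVec_mulVec, hΛ, etaDot]

lemma lorentz_mulVec_ne {Λ : Matrix (Fin n) (Fin n) ℝ} (hΛ : IsLorentz Λ)
    {v : Fin n → ℝ} (hv : v ≠ 0) : Λ.mulVec v ≠ 0 := by
  intro h
  apply hv
  have h1 : (Λᵀ * eta n * Λ).mulVec v = 0 := by
    rw [Matrix.mul_assoc, ← Matrix.mulVec_mulVec, ← Matrix.mulVec_mulVec, h,
      Matrix.mulVec_zero, Matrix.mulVec_zero]
  rw [hΛ] at h1
  have : (eta n * eta n).mulVec v = 0 := by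
    rw [← Matrix.mulVec_mulVec, h1, Matrix.mulVec_zero]
  rwa [eta_mul_eta, Matrix.one_mulVec] at this

/-- Transitivity on nonzero level sets via at most two reflections. -/
lemma exists_lorentz_of_B_eq {v w : Fin n → ℝ} (hvw : B v v = B w w) (h : B v v ≠ 0) :
    ∃ Λ : Matrix (Fin n) (Fin n) ℝ, IsLorentz Λ ∧ Λ.mulVec v = w := by
  by_cases hd : B (v - w) (v - w) = 0
  · -- use refl w * refl (v + w)
    have hsum : B (v + w) (v + w) = 4 * B v v := by
      have h1 := hd
      rw [B_sub_left, B_sub_right, B_sub_right] at h1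
      rw [B_add_left, B_add_right, B_add_right]
      rw [B_symm w v] at h1 ⊢
      linarith [hvw]
    have hsum' : B (v + w) (v + w) ≠ 0 := by
      rw [hsum]; intro hc; apply h; linarith
    have hBvw : B (v + w) v = 2 * B v v := by
      have h1 := hd
      rw [B_sub_left, B_sub_right, B_sub_right] at h1
      rw [B_add_left, B_symm w v]
      rw [B_symm w v] at h1
      linarith [hvw]
    have hBwne : B w w ≠ 0 := hvw ▸ h
    have hstep1 : (refl (v + w)).mulVec v = -w := by
      rw [refl_mulVec]
      have hco : (2 / B (v + w) (v + w) * B (v + w) v) = 1 := by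
        rw [hsum, hBvw]; field_simp; ring
      rw [hco, one_smul]
      abel
    have hstep2 : (refl w).mulVec (-w) = w := by
      have h5 : (-w : Fin n → ℝ) = (-1 : ℝ) • w := by funext i; simp
      rw [h5, Matrix.mulVec_smul, refl_mulVec]
      have hco : (2 / B w w * B w w) = 2 := by field_simp
      rw [hco]
      funext i; simp; ring
    exact ⟨refl w * refl (v + w),
      isLorentz_mul (refl_isLorentz hBwne) (refl_isLorentz hsum'),
      by rw [← Matrix.mulVec_mulVec, hstep1, hstep2]⟩
  · have hBv : B (v - w) v = B v v - B v w := by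
      rw [B_sub_left, B_symm w v]
    have hdd : B (v - w) (v - w) = 2 * (B v v - B v w) := by
      rw [B_sub_left, B_sub_right, B_sub_right, B_symm w v]
      linarith [hvw]
    refine ⟨refl (v - w), refl_isLorentz hd, ?_⟩
    rw [refl_mulVec]
    have hco : (2 / B (v - w) (v - w) * B (v - w) v) = 1 := by
      rw [hdd, hBv]
      have : B v v - B v w ≠ 0 := by
        intro hc; apply hd; rw [hdd, hc]; ring
      field_simp
    rw [hco, one_smul]
    abel

/-- Halving a nonzero null vector by a Lorentz map. -/
lemma exists_lorentz_half {w : Fin n → ℝ} (hw : w ≠ 0) (hB : B w w = 0) :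
    ∃ M : Matrix (Fin n) (Fin n) ℝ, IsLorentz M ∧ M.mulVec w = (1/2 : ℝ) • w := by
  have hdpos : (0:ℝ) < w ⬝ᵥ w := by
    rcases lt_or_eq_of_le (Finset.sum_nonneg fun i _ => mul_self_nonneg (w i)) with h | h
    · exact h
    · exact absurd ((dotProduct_self_eq_zero).mp h.symm) hw
  set x := (eta n).mulVec w with hx
  have hxx : B x x = 0 := by
    rw [B, hx, Matrix.mulVec_mulVec, eta_mul_eta, Matrix.one_mulVec, etaDot, hB]
  have hwx : B w x = w ⬝ᵥ w := by
    rw [B, hx, Matrix.mulVec_mulVec, eta_mul_eta, Matrix.one_mulVec]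
  have hxw : B x w = w ⬝ᵥ w := by rw [B_symm, hwx]
  have hu1 : B (w - x) (w - x) = -2 * (w ⬝ᵥ w) := by
    rw [B_sub_left, B_sub_right, B_sub_right, hB, hxx, hwx, hxw]; ring
  have hu1ne : B (w - x) (w - x) ≠ 0 := by rw [hu1]; nlinarith
  have hstep1 : (refl (w - x)).mulVec w = x := by
    rw [refl_mulVec]
    have hco : 2 / B (w - x) (w - x) * B (w - x) w = 1 := by
      rw [hu1, B_sub_left, hB, hxw]
      field_simp
      ring
    rw [hco, one_smul]
    abel
  set u2 := x - (1/2 : ℝ) • w with hu2def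
  have hu2 : B u2 u2 = -(w ⬝ᵥ w) := by
    rw [hu2def, B_sub_left, B_sub_right, B_sub_right, B_smul_left, B_smul_right,
      B_smul_left, B_smul_right, hxx, hB, hwx, hxw]
    ring
  have hu2ne : B u2 u2 ≠ 0 := by rw [hu2]; nlinarith
  have hstep2 : (refl u2).mulVec x = (1/2 : ℝ) • w := by
    rw [refl_mulVec]
    have hBu2x : B u2 x = -(w ⬝ᵥ w) / 2 := by
      rw [hu2def, B_sub_left, B_smul_left, hxx, hwx]; ring
    have hco : 2 / B u2 u2 * B u2 x = 1 := by
      rw [hu2, hBu2x]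
      field_simp
    rw [hco, one_smul, hu2def, sub_sub_cancel]
  exact ⟨refl u2 * refl (w - x),
    isLorentz_mul (refl_isLorentz hu2ne) (refl_isLorentz hu1ne),
    by rw [← Matrix.mulVec_mulVec, hstep1, hstep2]⟩

lemma sq_le_dot (w : Fin n → ℝ) (i : Fin n) : w i * w i ≤ w ⬝ᵥ w :=
  Finset.single_le_sum (fun j _ => mul_self_nonneg (w j)) (Finset.mem_univ i)

lemma dot_nonneg (w : Fin n → ℝ) : 0 ≤ w ⬝ᵥ w :=
  Finset.sum_nonneg fun _ _ => mul_self_nonneg _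

lemma dot_self_eq (hn : 0 < n) (w : Fin n → ℝ) :
    w ⬝ᵥ w = B w w + 2 * (w ⟨0, hn⟩ * w ⟨0, hn⟩) := by
  set i0 : Fin n := ⟨0, hn⟩ with hi0
  have hsum : w ⬝ᵥ w - B w w = ∑ i : Fin n, (if i = i0 then 2 * (w i0 * w i0) else 0) := by
    rw [B, eta]
    simp only [dotProduct, Matrix.mulVec_diagonal]
    rw [← Finset.sum_sub_distrib]
    refine Finset.sum_congr rfl fun i _ => ?_
    by_cases hi : (i : ℕ) = 0
    · have hii : i = i0 := Fin.ext (by simp [hi, hi0])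
      rw [hii]
      simp [hi0]
      ring
    · have hii : i ≠ i0 := by intro hc; apply hi; rw [hc]
      simp [hi, hii]
  rw [Finset.sum_ite_eq' Finset.univ i0] at hsum
  simp only [Finset.mem_univ, if_true] at hsum
  linarith

lemma B_single (t : ℝ) (i : Fin n) :
    B (t • (Pi.single i 1 : Fin n → ℝ)) (t • (Pi.single i 1 : Fin n → ℝ))
      = (if (i : ℕ) = 0 then (-1 : ℝ) else 1) * (t * t) := by
  rw [B_smul_left, B_smul_right, B, eta]
  rw [single_dotProduct, Matrix.mulVec_diagonal]
  simp [Pi.single_apply]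

lemma dot_single (t : ℝ) (i : Fin n) :
    (t • (Pi.single i 1 : Fin n → ℝ)) ⬝ᵥ (t • (Pi.single i 1 : Fin n → ℝ)) = t * t := by
  rw [smul_dotProduct, dotProduct_smul, single_dotProduct]
  simp

end AlignAux

open AlignAux

/-- Alignment theorem for vectors: the Lorentz orbit of `v` contains a vector of
minimal standard Euclidean norm iff `v = 0` or `v` is not null (`vᵀηv ≠ 0`). -/
theorem stmt1 {n : ℕ} (hn : 2 ≤ n) (v : Fin n → ℝ) :
    (∃ Λ₀ : Matrix (Fin n) (Fin n) ℝ, IsLorentz Λ₀ ∧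
      ∀ Λ : Matrix (Fin n) (Fin n) ℝ, IsLorentz Λ →
        euclNorm (Λ₀.mulVec v) ≤ euclNorm (Λ.mulVec v)) ↔
      (v = 0 ∨ v ⬝ᵥ (eta n).mulVec v ≠ 0) := by
  have h0 : 0 < n := by omega
  constructor
  · rintro ⟨Λ₀, hΛ₀, hmin⟩
    by_contra hcon
    push_neg at hcon
    obtain ⟨hv, hQ⟩ := hcon
    have hQ' : B v v = 0 := hQ
    set w := Λ₀.mulVec v with hw
    have hwne : w ≠ 0 := lorentz_mulVec_ne hΛ₀ hv
    have hBw : B w w = 0 := by rw [hw, B_lorentz hΛ₀]; exact hQ'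
    obtain ⟨M, hM, hMw⟩ := exists_lorentz_half hwne hBw
    have hle := hmin (M * Λ₀) (isLorentz_mul hM hΛ₀)
    rw [← Matrix.mulVec_mulVec, ← hw, hMw] at hle
    have hpos : 0 < w ⬝ᵥ w := by
      rcases lt_or_eq_of_le (dot_nonneg w) with h | h
      · exact h
      · exact absurd ((dotProduct_self_eq_zero).mp h.symm) hwne
    have hdot : ((1/2 : ℝ) • w) ⬝ᵥ ((1/2 : ℝ) • w) = (1/4) * (w ⬝ᵥ w) := by
      rw [smul_dotProduct, dotProduct_smul]
      simp; ring
    have h1 : euclNorm ((1/2 : ℝ) • w) < euclNorm w := by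
      rw [euclNorm, euclNorm, hdot]
      apply Real.sqrt_lt_sqrt (by positivity)
      linarith
    exact absurd hle (not_le.mpr h1)
  · rintro (rfl | hQ)
    · exact ⟨1, isLorentz_one, fun Λ hΛ => by
        rw [Matrix.mulVec_zero, Matrix.mulVec_zero]⟩
    · have hQ' : B v v ≠ 0 := hQ
      rcases hQ'.lt_or_gt with hneg | hpos
      · -- timelike
        set i0 : Fin n := ⟨0, h0⟩ with hi0
        set t := Real.sqrt (-(B v v)) with ht
        set w := t • (Pi.single i0 1 : Fin n → ℝ) with hwdef
        have ht2 : t * t = -(B v v) := Real.mul_self_sqrt (by linarith)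
        have hBw : B v v = B w w := by
          rw [hwdef, B_single, ht2]
          norm_num
        obtain ⟨Λ₀, hΛ₀, hΛ₀v⟩ := exists_lorentz_of_B_eq hBw hQ'
        refine ⟨Λ₀, hΛ₀, fun Λ hΛ => ?_⟩
        rw [hΛ₀v]
        apply Real.sqrt_le_sqrt
        have hww : w ⬝ᵥ w = -(B v v) := by rw [hwdef, dot_single, ht2]
        have hBx : B (Λ.mulVec v) (Λ.mulVec v) = B v v := B_lorentz hΛ v v
        have hx0 := sq_le_dot (Λ.mulVec v) i0
        have heq := dot_self_eq h0 (Λ.mulVec v)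
        rw [hBx] at heq
        rw [hww]
        have : (⟨0, h0⟩ : Fin n) = i0 := rfl
        rw [this] at heq
        linarith
      · -- spacelike
        set i0 : Fin n := ⟨0, h0⟩ with hi0
        set i1 : Fin n := ⟨1, by omega⟩ with hi1
        set t := Real.sqrt (B v v) with ht
        set w := t • (Pi.single i1 1 : Fin n → ℝ) with hwdef
        have ht2 : t * t = B v v := Real.mul_self_sqrt (by linarith)
        have hBw : B v v = B w w := by
          rw [hwdef, B_single]
          have : ((i1 : Fin n) : ℕ) = 1 := rfl
          rw [this]
          norm_num
          rw [ht2]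
        obtain ⟨Λ₀, hΛ₀, hΛ₀v⟩ := exists_lorentz_of_B_eq hBw hQ'
        refine ⟨Λ₀, hΛ₀, fun Λ hΛ => ?_⟩
        rw [hΛ₀v]
        apply Real.sqrt_le_sqrt
        have hww : w ⬝ᵥ w = B v v := by rw [hwdef, dot_single, ht2]
        have hBx : B (Λ.mulVec v) (Λ.mulVec v) = B v v := B_lorentz hΛ v v
        have heq := dot_self_eq h0 (Λ.mulVec v)
        rw [hBx] at heq
        rw [hww]
        nlinarith [mul_self_nonneg ((Λ.mulVec v) ⟨0, h0⟩)]

end
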